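/- Suppose for each coalition C ⊆ AG a function out_C : S × JA_C → P(S) is given, and fix a state s ∈ S. Then the following three sets of conditions are equivalent: (1) (a) for every agent a, { out_a(s, σ_a) : σ_a ∈ JA_a } is a general cover of out_∅(s, ∅), and (b) for every nonempty coalition C and σ_C ∈ JA_C, out_C(s, σ_C) = ⋂{ out_a(s, σ_C|_a) : a ∈ C }; (2) (a) for every agent a, { out_a(s, σ_a) : σ_a ∈ JA_a } is a general cover of out_∅(s, ∅), and (b) for all disjoint coalitions C, D, all σ_C ∈ JA_C and σ_D ∈ JA_D, out_{C∪D}(s, σ_C ∪ σ_D) = out_C(s, σ_C) ∩ out_D(s, σ_D); (3) (a) for every coalition C and σ_C ∈ JA_C, out_C(s, σ_C) = ⋃{ out_AG(s, σ_AG) : σ_AG ∈ JA_AG, σ_C ⊆ σ_AG }, and (b) for every coalition C and all σ_C, σ'_C, σ''_C ∈ JA_C, if σ''_C is a fusion of σ_C and σ'_C then out_C(s, σ_C) ∩ out_C(s, σ'_C) ⊆ out_C(s, σ''_C). -/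

import Mathlib

/-- Restriction of a joint action of `C` to a subcoalition `D ⊆ C`. -/
def restr {AG Ac : Type} {C D : Set AG} (h : D ⊆ C) (σ : ↥C → Ac) : ↥D → Ac :=
  fun a => σ ⟨a.1, h a.2⟩

open Classical in
/-- The common extension `σC ∪ σD` of joint actions of (disjoint) coalitions. -/
noncomputable def unionJA {AG Ac : Type} {C D : Set AG}
    (σC : ↥C → Ac) (σD : ↥D → Ac) : ↥(C ∪ D) → Ac :=
  fun a =>
    if h : a.1 ∈ C then σC ⟨a.1, h⟩
    else σD ⟨a.1, ((Set.mem_union _ _ _).mp a.2).resolve_left h⟩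

/-- The (unique) joint action of the empty coalition. -/
def emptyJA (AG Ac : Type) : ↥(∅ : Set AG) → Ac :=
  fun a => absurd a.2 (Set.notMem_empty a.1)

/-- Condition (1): the single-agent outcome families are general covers of
`out_∅(s, ∅)` and every nonempty coalition's outcome is the intersection of
its members' outcomes. -/
def Cond1 {AG S Ac : Type} (out : (C : Set AG) → S → (↥C → Ac) → Set S) (s : S) : Prop :=
  (∀ a : AG, ⋃₀ {Y : Set S | ∃ σ : ↥({a} : Set AG) → Ac, Y = out {a} s σ} =
      out ∅ s (emptyJA AG Ac)) ∧
  (∀ C : Set AG, C.Nonempty → ∀ σ : ↥C → Ac,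
    out C s σ = ⋂ a : ↥C, out {a.1} s (restr (Set.singleton_subset_iff.mpr a.2) σ))

/-- Condition (2): the single-agent outcome families are general covers of
`out_∅(s, ∅)` and outcomes compose over disjoint coalitions via intersection. -/
def Cond2 {AG S Ac : Type} (out : (C : Set AG) → S → (↥C → Ac) → Set S) (s : S) : Prop :=
  (∀ a : AG, ⋃₀ {Y : Set S | ∃ σ : ↥({a} : Set AG) → Ac, Y = out {a} s σ} =
      out ∅ s (emptyJA AG Ac)) ∧
  (∀ C D : Set AG, Disjoint C D → ∀ (σC : ↥C → Ac) (σD : ↥D → Ac),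
    out (C ∪ D) s (unionJA σC σD) = out C s σC ∩ out D s σD)

/-- Condition (3): every coalition's outcome is the union of the grand
coalition's outcomes over extending action profiles, and outcomes are closed
under fusions. -/
def Cond3 {AG S Ac : Type} (out : (C : Set AG) → S → (↥C → Ac) → Set S) (s : S) : Prop :=
  (∀ (C : Set AG) (σ : ↥C → Ac),
    out C s σ = {t : S | ∃ τ : ↥(Set.univ : Set AG) → Ac,
      (∀ a : ↥C, τ ⟨a.1, Set.mem_univ a.1⟩ = σ a) ∧ t ∈ out Set.univ s τ}) ∧
  (∀ (C : Set AG) (σ σ' σ'' : ↥C → Ac),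
    (∀ a : ↥C, σ'' a = σ a ∨ σ'' a = σ' a) →
    out C s σ ∩ out C s σ' ⊆ out C s σ'')

section Univ
variable {AG S Ac : Type}
variable (out : (C : Set AG) → S → (↥C → Ac) → Set S) (s : S)

lemma emptyJA_unique {C : Set AG} (h : C = ∅) (σ σ' : ↥C → Ac) : σ = σ' :=
  funext fun a => absurd (h ▸ a.2) (Set.notMem_empty a.1)

lemma outCongr {C D : Set AG} (h : C = D) (σ : ↥C → Ac) :
    out C s σ = out D s (restr (le_of_eq h.symm) σ) := by subst h; rfl

end Univ

section Impl13
variable {AG S Ac : Type} [Nonempty AG]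
variable (out : (C : Set AG) → S → (↥C → Ac) → Set S) (s : S)

lemma subset_empty_of_cond1 (h : Cond1 out s) (C : Set AG) (σ : ↥C → Ac) :
    out C s σ ⊆ out ∅ s (emptyJA AG Ac) := by
  rcases C.eq_empty_or_nonempty with hC | ⟨a, ha⟩
  · subst hC
    rw [emptyJA_unique rfl σ (emptyJA AG Ac)]
  · intro t ht
    rw [h.2 C ⟨a, ha⟩ σ] at ht
    have hta := Set.mem_iInter.mp ht ⟨a, ha⟩
    rw [← h.1 a]
    exact ⟨_, ⟨_, rfl⟩, hta⟩

lemma one_to_three (h : Cond1 out s) : Cond3 out s := by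
  constructor
  · intro C σ
    ext t
    constructor
    · intro ht
      have h0 : t ∈ out ∅ s (emptyJA AG Ac) := subset_empty_of_cond1 out s h C σ ht
      have hex : ∀ x : AG, ∃ g : ↥({x} : Set AG) → Ac, t ∈ out {x} s g := by
        intro x
        have h0' := h0
        rw [← h.1 x] at h0'
        obtain ⟨Y, ⟨g, rfl⟩, htY⟩ := h0'
        exact ⟨g, htY⟩
      choose g hg using hex
      classical
      refine ⟨fun a => if hx : a.1 ∈ C then σ ⟨a.1, hx⟩ else g a.1 ⟨a.1, rfl⟩, ?_, ?_⟩
      · intro a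
        simp only [dif_pos a.2]
      · rw [h.2 Set.univ ⟨Classical.arbitrary AG, Set.mem_univ _⟩ _]
        rw [Set.mem_iInter]
        intro a
        by_cases hx : a.1 ∈ C
        · have hC : C.Nonempty := ⟨a.1, hx⟩
          rw [h.2 C hC σ] at ht
          have hta := Set.mem_iInter.mp ht ⟨a.1, hx⟩
          have hfe : restr (Set.singleton_subset_iff.mpr (Set.mem_univ a.1))
              (fun b : ↥(Set.univ : Set AG) =>
                if hb : b.1 ∈ C then σ ⟨b.1, hb⟩ else g b.1 ⟨b.1, rfl⟩) =
              restr (Set.singleton_subset_iff.mpr hx) σ := by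
            funext b
            have hb : b.1 ∈ C := by rw [show b.1 = a.1 from b.2]; exact hx
            show (if hb' : b.1 ∈ C then σ ⟨b.1, hb'⟩ else g b.1 ⟨b.1, rfl⟩) = σ ⟨b.1, _⟩
            rw [dif_pos hb]
          rw [hfe]
          exact hta
        · have hfe : restr (Set.singleton_subset_iff.mpr (Set.mem_univ a.1))
              (fun b : ↥(Set.univ : Set AG) =>
                if hb : b.1 ∈ C then σ ⟨b.1, hb⟩ else g b.1 ⟨b.1, rfl⟩) = g a.1 := by
            funext b
            rw [show b = (⟨a.1, rfl⟩ : ↥({a.1} : Set AG)) from Subtype.ext b.2]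
            show (if hb' : a.1 ∈ C then σ ⟨a.1, hb'⟩ else g a.1 ⟨a.1, rfl⟩) = g a.1 ⟨a.1, rfl⟩
            rw [dif_neg hx]
          rw [hfe]
          exact hg a.1
    · rintro ⟨τ, hext, hτ⟩
      rcases C.eq_empty_or_nonempty with hC | hne
      · subst hC
        rw [emptyJA_unique rfl σ (emptyJA AG Ac)]
        exact subset_empty_of_cond1 out s h Set.univ τ hτ
      · rw [h.2 C hne σ, Set.mem_iInter]
        intro a
        rw [h.2 Set.univ ⟨a.1, Set.mem_univ _⟩ τ] at hτ
        have hta := Set.mem_iInter.mp hτ ⟨a.1, Set.mem_univ _⟩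
        have hfe : restr (Set.singleton_subset_iff.mpr (Set.mem_univ a.1)) τ =
            restr (Set.singleton_subset_iff.mpr a.2) σ := by
          funext b
          have hb : b.1 ∈ C := by rw [show b.1 = a.1 from b.2]; exact a.2
          show τ ⟨b.1, _⟩ = σ ⟨b.1, _⟩
          exact hext ⟨b.1, hb⟩
        rw [hfe] at hta
        exact hta
  · intro C σ σ' σ'' hfus
    rcases C.eq_empty_or_nonempty with hC | hne
    · rw [emptyJA_unique hC σ'' σ]
      exact Set.inter_subset_left
    · intro t ⟨ht, ht'⟩
      rw [h.2 C hne σ] at ht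
      rw [h.2 C hne σ'] at ht'
      rw [h.2 C hne σ'', Set.mem_iInter]
      intro a
      rcases hfus a with hf | hf
      · have : restr (Set.singleton_subset_iff.mpr a.2) σ'' =
            restr (Set.singleton_subset_iff.mpr a.2) σ := by
          funext b
          show σ'' ⟨b.1, _⟩ = σ ⟨b.1, _⟩
          rw [show (⟨b.1, Set.singleton_subset_iff.mpr a.2 b.2⟩ : ↥C) = a from Subtype.ext b.2]
          exact hf
        rw [this]
        exact Set.mem_iInter.mp ht a
      · have : restr (Set.singleton_subset_iff.mpr a.2) σ'' =
            restr (Set.singleton_subset_iff.mpr a.2) σ' := by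
          funext b
          show σ'' ⟨b.1, _⟩ = σ' ⟨b.1, _⟩
          rw [show (⟨b.1, Set.singleton_subset_iff.mpr a.2 b.2⟩ : ↥C) = a from Subtype.ext b.2]
          exact hf
        rw [this]
        exact Set.mem_iInter.mp ht' a

end Impl13

section Impl32
variable {AG S Ac : Type}
variable (out : (C : Set AG) → S → (↥C → Ac) → Set S) (s : S)

lemma three_to_two (h : Cond3 out s) : Cond2 out s := by
  constructor
  · intro a
    ext t
    constructor
    · rintro ⟨Y, ⟨g, rfl⟩, htY⟩
      rw [h.1 ({a} : Set AG) g] at htY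
      obtain ⟨τ, _, hτ⟩ := htY
      rw [h.1 ∅ (emptyJA AG Ac)]
      exact ⟨τ, fun b => absurd b.2 (Set.notMem_empty b.1), hτ⟩
    · intro ht
      rw [h.1 ∅ (emptyJA AG Ac)] at ht
      obtain ⟨τ, _, hτ⟩ := ht
      refine ⟨out {a} s (fun b => τ ⟨b.1, Set.mem_univ b.1⟩), ⟨_, rfl⟩, ?_⟩
      rw [h.1 ({a} : Set AG) _]
      exact ⟨τ, fun b => rfl, hτ⟩
  · intro C D hdis σC σD
    ext t
    constructor
    · intro ht
      rw [h.1 (C ∪ D) (unionJA σC σD)] at ht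
      obtain ⟨τ, hext, hτ⟩ := ht
      constructor
      · rw [h.1 C σC]
        refine ⟨τ, fun a => ?_, hτ⟩
        have := hext ⟨a.1, Or.inl a.2⟩
        rw [this]
        show unionJA σC σD ⟨a.1, Or.inl a.2⟩ = σC a
        unfold unionJA
        rw [dif_pos a.2]
      · rw [h.1 D σD]
        refine ⟨τ, fun a => ?_, hτ⟩
        have := hext ⟨a.1, Or.inr a.2⟩
        rw [this]
        show unionJA σC σD ⟨a.1, Or.inr a.2⟩ = σD a
        unfold unionJA
        rw [dif_neg (fun hc => Set.disjoint_left.mp hdis hc a.2)]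
    · rintro ⟨htC, htD⟩
      rw [h.1 C σC] at htC
      rw [h.1 D σD] at htD
      obtain ⟨τ1, hext1, hτ1⟩ := htC
      obtain ⟨τ2, hext2, hτ2⟩ := htD
      classical
      set τ : ↥(Set.univ : Set AG) → Ac :=
        fun a => if a.1 ∈ C then τ1 a else τ2 a with hτdef
      have hfus : ∀ a : ↥(Set.univ : Set AG), τ a = τ1 a ∨ τ a = τ2 a := by
        intro a
        by_cases hc : a.1 ∈ C
        · left; simp [hτdef, if_pos hc]
        · right; simp [hτdef, if_neg hc]
      have hτmem : t ∈ out Set.univ s τ := h.2 Set.univ τ1 τ2 τ hfus ⟨hτ1, hτ2⟩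
      rw [h.1 (C ∪ D) (unionJA σC σD)]
      refine ⟨τ, fun a => ?_, hτmem⟩
      show (if a.1 ∈ C then τ1 ⟨a.1, Set.mem_univ a.1⟩ else τ2 ⟨a.1, Set.mem_univ a.1⟩)
          = unionJA σC σD a
      unfold unionJA
      by_cases hc : a.1 ∈ C
      · rw [if_pos hc, dif_pos hc]
        exact hext1 ⟨a.1, hc⟩
      · rw [if_neg hc, dif_neg hc]
        exact hext2 ⟨a.1, ((Set.mem_union _ _ _).mp a.2).resolve_left hc⟩

end Impl32

section Impl21
variable {AG S Ac : Type} [Fintype AG]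
variable (out : (C : Set AG) → S → (↥C → Ac) → Set S) (s : S)

omit [Fintype AG] in
lemma key2 (h : Cond2 out s) (C : Set AG) (hfin : C.Finite) :
    ∀ σ : ↥C → Ac, ∀ t : S,
      t ∈ out C s σ ↔ (t ∈ out ∅ s (emptyJA AG Ac) ∧
        ∀ x, ∀ hx : x ∈ C, t ∈ out {x} s (restr (Set.singleton_subset_iff.mpr hx) σ)) := by
  refine Set.Finite.induction_on (motive := fun C _ => ∀ σ : ↥C → Ac, ∀ t : S,
      t ∈ out C s σ ↔ (t ∈ out ∅ s (emptyJA AG Ac) ∧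
        ∀ x, ∀ hx : x ∈ C, t ∈ out {x} s (restr (Set.singleton_subset_iff.mpr hx) σ)))
      C hfin ?_ @?_
  case refine_1 =>
    intro σ t
    rw [emptyJA_unique rfl σ (emptyJA AG Ac)]
    simp only [Set.notMem_empty]
    exact ⟨fun ht => ⟨ht, fun x hx => absurd hx (Set.notMem_empty x)⟩, fun ⟨ht, _⟩ => ht⟩
  case refine_2 =>
    intro x C hx hCfin ih
    intro σ t
    have hins : insert x C = ({x} : Set AG) ∪ C := Set.singleton_union.symm
    have hstep : out (insert x C) s σ =
        out {x} s (restr (by simp : ({x} : Set AG) ⊆ insert x C) σ) ∩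
        out C s (restr (Set.subset_insert x C) σ) := by
      rw [outCongr out s hins σ]
      have : restr (le_of_eq hins.symm) σ =
          unionJA (restr (by simp : ({x} : Set AG) ⊆ insert x C) σ)
                  (restr (Set.subset_insert x C) σ) := by
        funext a
        unfold unionJA restr
        split <;> rfl
      rw [this]
      exact h.2 {x} C (Set.disjoint_singleton_left.mpr hx) _ _
    rw [hstep]
    constructor
    · rintro ⟨htx, htC⟩
      rw [ih _ t] at htC
      obtain ⟨h0, hall⟩ := htC
      refine ⟨h0, fun y hy => ?_⟩
      rcases Set.mem_insert_iff.mp hy with hyx | hyC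
      · subst hyx
        exact htx
      · exact hall y hyC
    · rintro ⟨h0, hall⟩
      refine ⟨hall x (Set.mem_insert x C), ?_⟩
      rw [ih _ t]
      exact ⟨h0, fun y hy => hall y (Set.mem_insert_of_mem x hy)⟩

lemma two_to_one (h : Cond2 out s) : Cond1 out s := by
  refine ⟨h.1, ?_⟩
  intro C hne σ
  ext t
  rw [key2 out s h C (Set.toFinite C) σ t, Set.mem_iInter]
  constructor
  · rintro ⟨_, hall⟩ a
    exact hall a.1 a.2
  · intro hall
    obtain ⟨a, ha⟩ := hne
    refine ⟨?_, fun x hx => hall ⟨x, hx⟩⟩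
    have := hall ⟨a, ha⟩
    rw [← h.1 a]
    exact ⟨_, ⟨_, rfl⟩, this⟩

end Impl21

/-- The three sets of conditions characterizing single-coalition-first action
models are equivalent. -/
theorem three_equivalent_conditions
    {AG S Ac : Type} [Fintype AG] [Nonempty AG] [Nonempty S] [Nonempty Ac]
    (out : (C : Set AG) → S → (↥C → Ac) → Set S) (s : S) :
    (Cond1 out s ↔ Cond2 out s) ∧ (Cond1 out s ↔ Cond3 out s) := by
  exact ⟨⟨fun h1 => three_to_two out s (one_to_three out s h1), two_to_one out s⟩,
    ⟨one_to_three out s, fun h3 => two_to_one out s (three_to_two out s h3)⟩⟩
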